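/- For an odd integer N ≥ 3, let P be the cyclic random-walk transition matrix on ℤ/Nℤ. Then for every n ≥ 1 and all states i,j, |(P^n)(i,j) − 1/N| ≤ ((3^{(N−1)/2} − 1)/3^{(N−1)/2})^{(2n/(N−1))−1}, where the exponent is a real number and the power is the real power. -/

import Mathlib

/-- The cyclic random-walk transition matrix on `ℤ/Nℤ`:
`P i j = 1/3` if `j ∈ {i−1, i, i+1}` and `0` otherwise. -/
noncomputable def cyclicRW (N : ℕ) : Matrix (ZMod N) (ZMod N) ℝ :=
  fun i j => if j = i - 1 ∨ j = i ∨ j = i + 1 then 1 / 3 else 0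

section aux
variable {N : ℕ} [NeZero N]

omit [NeZero N] in
lemma cyclicRW_nonneg (i j : ZMod N) : 0 ≤ cyclicRW N i j := by
  unfold cyclicRW; split_ifs <;> norm_num

lemma cyclicRW_pow_nonneg (n : ℕ) (i j : ZMod N) : 0 ≤ (cyclicRW N ^ n) i j := by
  induction n generalizing i j with
  | zero =>
    rw [pow_zero]
    by_cases h : i = j <;> simp [Matrix.one_apply, h]
  | succ n ih =>
    rw [pow_succ, Matrix.mul_apply]
    exact Finset.sum_nonneg fun k _ => mul_nonneg (ih i k) (cyclicRW_nonneg k j)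

omit [NeZero N] in
lemma cyclicRW_symm (i j : ZMod N) : cyclicRW N i j = cyclicRW N j i := by
  unfold cyclicRW
  refine if_congr ?_ rfl rfl
  constructor
  · rintro (rfl | rfl | rfl)
    · exact Or.inr (Or.inr (by ring))
    · exact Or.inr (Or.inl rfl)
    · exact Or.inl (by ring)
  · rintro (rfl | rfl | rfl)
    · exact Or.inr (Or.inr (by ring))
    · exact Or.inr (Or.inl rfl)
    · exact Or.inl (by ring)

lemma cyclicRW_row_sum (hN : 3 ≤ N) (i : ZMod N) : ∑ j, cyclicRW N i j = 1 := by
  have h1 : (i - 1 : ZMod N) ≠ i := by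
    intro h
    have h1 : (1 : ZMod N) = 0 := sub_eq_self.mp h
    have h2 : ((1:ℕ) : ZMod N) = 0 := by exact_mod_cast h1
    have h3 := (ZMod.natCast_eq_zero_iff 1 N).mp h2
    have := Nat.le_of_dvd one_pos h3
    omega
  have h2 : i ≠ i + 1 := by
    intro h
    have h1 : (1 : ZMod N) = 0 := left_eq_add.mp h
    have h2 : ((1:ℕ) : ZMod N) = 0 := by exact_mod_cast h1
    have h3 := (ZMod.natCast_eq_zero_iff 1 N).mp h2
    have := Nat.le_of_dvd one_pos h3
    omega
  have h13 : (i - 1 : ZMod N) ≠ i + 1 := by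
    intro h
    have h1 : ((2:ℕ) : ZMod N) = 0 := by
      push_cast
      linear_combination -h
    have h3 := (ZMod.natCast_eq_zero_iff 2 N).mp h1
    have := Nat.le_of_dvd two_pos h3
    omega
  have hform : ∀ j, cyclicRW N i j =
      if j ∈ ({i-1, i, i+1} : Finset (ZMod N)) then (1/3:ℝ) else 0 := by
    intro j; simp [cyclicRW]
  rw [Finset.sum_congr rfl fun j _ => hform j, Finset.sum_ite_mem, Finset.univ_inter,
    Finset.sum_const]
  have hcard : ({i-1, i, i+1} : Finset (ZMod N)).card = 3 := by
    rw [Finset.card_insert_of_notMem (by simp [h1, h13]),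
      Finset.card_insert_of_notMem (by simp [h2]), Finset.card_singleton]
  rw [hcard]
  norm_num

lemma cyclicRW_col_sum (hN : 3 ≤ N) (j : ZMod N) : ∑ i, cyclicRW N i j = 1 := by
  rw [Finset.sum_congr rfl fun i _ => cyclicRW_symm i j]
  exact cyclicRW_row_sum hN j

lemma cyclicRW_pow_row_sum (hN : 3 ≤ N) (n : ℕ) (i : ZMod N) :
    ∑ j, (cyclicRW N ^ n) i j = 1 := by
  induction n generalizing i with
  | zero => simp [Matrix.one_apply]
  | succ n ih =>
    rw [pow_succ']
    simp only [Matrix.mul_apply]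
    rw [Finset.sum_comm]
    calc ∑ k, ∑ j, cyclicRW N i k * (cyclicRW N ^ n) k j
        = ∑ k, cyclicRW N i k * ∑ j, (cyclicRW N ^ n) k j := by
          simp [Finset.mul_sum]
      _ = ∑ k, cyclicRW N i k := by simp [fun k => ih k]
      _ = 1 := cyclicRW_row_sum hN i

lemma cyclicRW_pow_col_sum (hN : 3 ≤ N) (n : ℕ) (j : ZMod N) :
    ∑ i, (cyclicRW N ^ n) i j = 1 := by
  induction n generalizing j with
  | zero => simp [Matrix.one_apply]
  | succ n ih =>
    rw [pow_succ]
    simp only [Matrix.mul_apply]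
    rw [Finset.sum_comm]
    calc ∑ k, ∑ i, (cyclicRW N ^ n) i k * cyclicRW N k j
        = ∑ k, (∑ i, (cyclicRW N ^ n) i k) * cyclicRW N k j := by
          simp [Finset.sum_mul]
      _ = ∑ k, cyclicRW N k j := by simp [fun k => ih k]
      _ = 1 := cyclicRW_col_sum hN j

lemma cyclicRW_pow_le_one (hN : 3 ≤ N) (n : ℕ) (i j : ZMod N) :
    (cyclicRW N ^ n) i j ≤ 1 := by
  calc (cyclicRW N ^ n) i j ≤ ∑ j', (cyclicRW N ^ n) i j' :=
        Finset.single_le_sum (fun k _ => cyclicRW_pow_nonneg n i k) (Finset.mem_univ j)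
    _ = 1 := cyclicRW_pow_row_sum hN n i




lemma cyclicRW_pow_entry_lb (s : ℕ) (d : ℤ) (hd : d.natAbs ≤ s) (i : ZMod N) :
    ((1:ℝ)/3)^s ≤ (cyclicRW N ^ s) i (i + (d : ZMod N)) := by
  induction s generalizing d i with
  | zero =>
    have hd0 : d = 0 := by omega
    subst hd0
    simp [Matrix.one_apply]
  | succ s ih =>
    rw [show cyclicRW N ^ (s+1) = cyclicRW N * cyclicRW N ^ s from pow_succ' _ _, Matrix.mul_apply]
    by_cases h : d.natAbs ≤ s
    · have hstep := ih d h i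
      have hPi : cyclicRW N i i = 1/3 := by simp [cyclicRW]
      calc ((1:ℝ)/3)^(s+1) = (1/3) * (1/3)^s := by ring
        _ ≤ cyclicRW N i i * (cyclicRW N ^ s) i (i + (d : ZMod N)) := by
            rw [hPi]
            exact mul_le_mul_of_nonneg_left hstep (by norm_num)
        _ ≤ ∑ k, cyclicRW N i k * (cyclicRW N ^ s) k (i + (d : ZMod N)) :=
            Finset.single_le_sum
              (fun k _ => mul_nonneg (cyclicRW_nonneg i k) (cyclicRW_pow_nonneg s k _))
              (Finset.mem_univ i)
    · have hcases : d = (s:ℤ) + 1 ∨ d = -((s:ℤ) + 1) := by omega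
      rcases hcases with rfl | rfl
      · have hP : cyclicRW N i (i+1) = 1/3 := by simp [cyclicRW]
        have hstep := ih ((s:ℤ)) (by omega) (i+1)
        have hrw : (i + 1) + ((s : ℤ) : ZMod N) = i + (((s:ℤ)+1 : ℤ) : ZMod N) := by
          push_cast; ring
        rw [hrw] at hstep
        calc ((1:ℝ)/3)^(s+1) = (1/3) * (1/3)^s := by ring
          _ ≤ cyclicRW N i (i+1) * (cyclicRW N ^ s) (i+1) (i + (((s:ℤ)+1 : ℤ) : ZMod N)) := by
              rw [hP]
              exact mul_le_mul_of_nonneg_left hstep (by norm_num)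
          _ ≤ ∑ k, cyclicRW N i k * (cyclicRW N ^ s) k (i + (((s:ℤ)+1 : ℤ) : ZMod N)) :=
              Finset.single_le_sum
                (fun k _ => mul_nonneg (cyclicRW_nonneg i k) (cyclicRW_pow_nonneg s k _))
                (Finset.mem_univ (i+1))
      · have hP : cyclicRW N i (i-1) = 1/3 := by simp [cyclicRW]
        have hstep := ih (-(s:ℤ)) (by omega) (i-1)
        have hrw : (i - 1) + ((-(s : ℤ) : ℤ) : ZMod N) = i + ((-((s:ℤ)+1) : ℤ) : ZMod N) := by
          push_cast; ring
        rw [hrw] at hstep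
        calc ((1:ℝ)/3)^(s+1) = (1/3) * (1/3)^s := by ring
          _ ≤ cyclicRW N i (i-1) * (cyclicRW N ^ s) (i-1) (i + ((-((s:ℤ)+1) : ℤ) : ZMod N)) := by
              rw [hP]
              exact mul_le_mul_of_nonneg_left hstep (by norm_num)
          _ ≤ ∑ k, cyclicRW N i k * (cyclicRW N ^ s) k (i + ((-((s:ℤ)+1) : ℤ) : ZMod N)) :=
              Finset.single_le_sum
                (fun k _ => mul_nonneg (cyclicRW_nonneg i k) (cyclicRW_pow_nonneg s k _))
                (Finset.mem_univ (i-1))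

lemma cyclicRW_pow_min (hodd : Odd N) (i k : ZMod N) :
    ((1:ℝ)/3)^((N-1)/2) ≤ (cyclicRW N ^ ((N-1)/2)) i k := by
  have hN1 : 1 ≤ N := Nat.one_le_iff_ne_zero.mpr (NeZero.ne N)
  have hd : (k - i).valMinAbs.natAbs ≤ (N-1)/2 := by
    have h := ZMod.natAbs_valMinAbs_le (k - i)
    obtain ⟨t, rfl⟩ := hodd
    omega
  have h := cyclicRW_pow_entry_lb ((N-1)/2) (k - i).valMinAbs hd i
  rw [ZMod.coe_valMinAbs] at h
  have h2 : i + (k - i) = k := by ring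
  rwa [h2] at h


end aux

/-- For odd `N ≥ 3`, the cyclic random walk on `ℤ/Nℤ` satisfies
`|(P^n) i j − 1/N| ≤ ((3^{(N−1)/2} − 1)/3^{(N−1)/2})^{(2n/(N−1))−1}`
(real exponent, real power) for all `n ≥ 1` and all states `i, j`. -/
theorem cyclicRW_convergence_rate_odd (N : ℕ) [NeZero N] (hN : 3 ≤ N) (hodd : Odd N) :
    ∀ n : ℕ, 1 ≤ n → ∀ i j : ZMod N,
      |(cyclicRW N ^ n) i j - 1 / (N : ℝ)| ≤
        (((3 : ℝ) ^ ((N - 1) / 2) - 1) / (3 : ℝ) ^ ((N - 1) / 2)) ^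
          (2 * (n : ℝ) / ((N : ℝ) - 1) - 1) := by
  set m := (N - 1) / 2 with hm
  have hNm : N = 2 * m + 1 := by obtain ⟨t, rfl⟩ := hodd; omega
  have hm1 : 1 ≤ m := by omega
  set P := cyclicRW N with hP
  set ε : ℝ := 1 - (1/3:ℝ)^m with hε
  have hε0 : 0 < ε := by
    have : (1/3:ℝ)^m < 1 := by
      apply pow_lt_one₀ (by norm_num) (by norm_num)
      omega
    simp only [hε]; linarith
  have hε1 : ε ≤ 1 := by
    have : (0:ℝ) ≤ (1/3:ℝ)^m := by positivity
    simp only [hε]; linarith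
  intro n hn i j
  have hne : (Finset.univ : Finset (ZMod N)).Nonempty := ⟨0, Finset.mem_univ 0⟩
  set g : ℕ → ℝ := fun n => Finset.univ.sup' hne (fun i => (P ^ n) i j) with hg
  set l : ℕ → ℝ := fun n => Finset.univ.inf' hne (fun i => (P ^ n) i j) with hl
  have hle_g : ∀ n i, (P ^ n) i j ≤ g n := fun n i =>
    Finset.le_sup' (fun i => (P ^ n) i j) (Finset.mem_univ i)
  have hl_le : ∀ n i, l n ≤ (P ^ n) i j := fun n i =>
    Finset.inf'_le (fun i => (P ^ n) i j) (Finset.mem_univ i)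
  have hl0 : ∀ n, 0 ≤ l n := fun n =>
    Finset.le_inf' hne _ (fun i _ => cyclicRW_pow_nonneg n i j)
  have hg1 : ∀ n, g n ≤ 1 := fun n =>
    Finset.sup'_le hne _ (fun i _ => cyclicRW_pow_le_one hN n i j)
  have hNpos : (0:ℝ) < N := by positivity
  -- 1/N is between l n and g n
  have hπ : ∀ n, l n ≤ 1 / N ∧ 1 / N ≤ g n := by
    intro n
    have hsum := cyclicRW_pow_col_sum hN n j
    constructor
    · have h1 : (N:ℝ) * l n ≤ 1 := by
        calc (N:ℝ) * l n = ∑ _i : ZMod N, l n := by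
              rw [Finset.sum_const, Finset.card_univ, ZMod.card, nsmul_eq_mul]
          _ ≤ ∑ i, (P ^ n) i j := Finset.sum_le_sum (fun i _ => hl_le n i)
          _ = 1 := hsum
      rw [le_div_iff₀ hNpos]
      linarith
    · have h1 : (1:ℝ) ≤ (N:ℝ) * g n := by
        calc (1:ℝ) = ∑ i, (P ^ n) i j := hsum.symm
          _ ≤ ∑ _i : ZMod N, g n := Finset.sum_le_sum (fun i _ => hle_g n i)
          _ = (N:ℝ) * g n := by
              rw [Finset.sum_const, Finset.card_univ, ZMod.card, nsmul_eq_mul]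
      rw [div_le_iff₀ hNpos]
      linarith
  -- contraction over m steps
  have hcontr : ∀ n, g (n + m) - l (n + m) ≤ ε * (g n - l n) := by
    intro n
    set c : ZMod N → ℝ := fun k => if k = j then (1/3:ℝ)^m else 0 with hc
    have hw_nonneg : ∀ i k, 0 ≤ (P ^ m) i k - c k := by
      intro i k
      by_cases hk : k = j
      · simp only [hc, if_pos hk]
        have := cyclicRW_pow_min hodd i k
        rw [← hm] at this
        linarith
      · simp only [hc, if_neg hk, sub_zero]
        exact cyclicRW_pow_nonneg m i k
    have hw_sum : ∀ i : ZMod N, ∑ k, ((P ^ m) i k - c k) = ε := by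
      intro i
      rw [Finset.sum_sub_distrib, cyclicRW_pow_row_sum hN m i]
      have : ∑ k, c k = (1/3:ℝ)^m := by
        simp [hc, Finset.sum_ite_eq']
      rw [this]
    have hsplit : ∀ i, (P ^ (n + m)) i j =
        (∑ k, ((P ^ m) i k - c k) * (P ^ n) k j) + (1/3:ℝ)^m * (P ^ n) j j := by
      intro i
      have hpow : P ^ (n + m) = P ^ m * P ^ n := by rw [add_comm, pow_add]
      rw [hpow, Matrix.mul_apply]
      have h1 : ∀ k : ZMod N, (P ^ m) i k * (P ^ n) k j =
          ((P ^ m) i k - c k) * (P ^ n) k j + c k * (P ^ n) k j := fun k => by ring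
      rw [Finset.sum_congr rfl fun k _ => h1 k, Finset.sum_add_distrib]
      congr 1
      simp [hc, ite_mul, Finset.sum_ite_eq']
    have hup : ∀ i, (P ^ (n + m)) i j ≤ ε * g n + (1/3:ℝ)^m * (P ^ n) j j := by
      intro i
      rw [hsplit i]
      have : ∑ k, ((P ^ m) i k - c k) * (P ^ n) k j ≤ ε * g n := by
        calc ∑ k, ((P ^ m) i k - c k) * (P ^ n) k j
            ≤ ∑ k, ((P ^ m) i k - c k) * g n :=
              Finset.sum_le_sum (fun k _ =>
                mul_le_mul_of_nonneg_left (hle_g n k) (hw_nonneg i k))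
          _ = (∑ k, ((P ^ m) i k - c k)) * g n := by rw [Finset.sum_mul]
          _ = ε * g n := by rw [hw_sum i]
      exact add_le_add_left this _
    have hlo : ∀ i, ε * l n + (1/3:ℝ)^m * (P ^ n) j j ≤ (P ^ (n + m)) i j := by
      intro i
      rw [hsplit i]
      have : ε * l n ≤ ∑ k, ((P ^ m) i k - c k) * (P ^ n) k j := by
        calc ε * l n = (∑ k, ((P ^ m) i k - c k)) * l n := by rw [hw_sum i]
          _ = ∑ k, ((P ^ m) i k - c k) * l n := by rw [Finset.sum_mul]
          _ ≤ ∑ k, ((P ^ m) i k - c k) * (P ^ n) k j :=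
              Finset.sum_le_sum (fun k _ =>
                mul_le_mul_of_nonneg_left (hl_le n k) (hw_nonneg i k))
      exact add_le_add_left this _
    have hgup : g (n + m) ≤ ε * g n + (1/3:ℝ)^m * (P ^ n) j j :=
      Finset.sup'_le hne _ (fun i _ => hup i)
    have hllo : ε * l n + (1/3:ℝ)^m * (P ^ n) j j ≤ l (n + m) :=
      Finset.le_inf' hne _ (fun i _ => hlo i)
    calc g (n + m) - l (n + m)
        ≤ (ε * g n + (1/3:ℝ)^m * (P ^ n) j j) - (ε * l n + (1/3:ℝ)^m * (P ^ n) j j) :=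
          sub_le_sub hgup hllo
      _ = ε * (g n - l n) := by ring
  -- iterate
  have hiter : ∀ n, g n - l n ≤ ε ^ (n / m) := by
    intro n
    induction n using Nat.strong_induction_on with
    | _ n ih =>
      by_cases hnm : n < m
      · rw [Nat.div_eq_of_lt hnm, pow_zero]
        linarith [hg1 n, hl0 n]
      · push_neg at hnm
        have h1 : (n - m) + m = n := by omega
        have h2 := hcontr (n - m)
        rw [h1] at h2
        have h3 := ih (n - m) (by omega)
        have h4 : n / m = (n - m) / m + 1 := by
          rw [Nat.div_eq_sub_div (by omega) hnm]
        rw [h4, pow_succ]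
        calc g n - l n ≤ ε * (g (n - m) - l (n - m)) := h2
          _ ≤ ε * ε ^ ((n - m) / m) := mul_le_mul_of_nonneg_left h3 (le_of_lt hε0)
          _ = ε ^ ((n - m) / m) * ε := mul_comm _ _
  -- assemble
  have habs : |(P ^ n) i j - 1 / N| ≤ g n - l n := by
    rw [abs_le]
    have h1 := hle_g n i
    have h2 := hl_le n i
    have h3 := (hπ n).1
    have h4 := (hπ n).2
    constructor <;> linarith
  have hbase : ((3:ℝ)^m - 1) / (3:ℝ)^m = ε := by
    have h3 : ((3:ℝ)^m) ≠ 0 := by positivity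
    field_simp [hε]
    rw [hε, mul_sub, mul_one, ← mul_pow]
    norm_num
  rw [hbase]
  set q := n / m with hq
  have hexp : 2 * (n : ℝ) / ((N : ℝ) - 1) - 1 ≤ (q : ℕ) := by
    have hN1 : (N:ℝ) - 1 = 2 * (m:ℝ) := by
      rw [hNm]; push_cast; ring
    rw [hN1]
    have hnlt : n < m * (q + 1) := by
      have hmod := Nat.div_add_mod n m
      have hlt : n % m < m := Nat.mod_lt n (by omega)
      calc n = m * q + n % m := by rw [hq, hmod]
        _ < m * q + m := by omega
        _ = m * (q + 1) := by ring
    have hnltR : (n:ℝ) < (m:ℝ) * ((q:ℝ) + 1) := by exact_mod_cast hnlt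
    have hmpos : (0:ℝ) < 2 * (m:ℝ) := by positivity
    rw [sub_le_iff_le_add, div_le_iff₀ hmpos]
    nlinarith
  calc |(P ^ n) i j - 1 / (N:ℝ)| ≤ g n - l n := habs
    _ ≤ ε ^ q := hiter n
    _ = ε ^ (q : ℝ) := (Real.rpow_natCast ε q).symm
    _ ≤ ε ^ (2 * (n : ℝ) / ((N : ℝ) - 1) - 1) :=
        Real.rpow_le_rpow_of_exponent_ge hε0 hε1 hexp
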